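/- A Hamiltonian cycle on S can be obtained by shortcutting some Euler tour of the doubled tree of T if and only if it conforms to T, i.e., if and only if for every node u ∈ S the set T(u) forms a contiguous cyclic arc of the cycle. -/

import Mathlib

/-- A rooted tree on a vertex type `V`, given by a parent function under which
every vertex reaches the root. -/
structure ParentTree (V : Type) where
  root : V
  parent : V → V
  parent_root : parent root = root
  reaches_root : ∀ v, ∃ k, parent^[k] v = root

namespace ParentTree

variable {V : Type}

/-- The set `C(u)` of children of `u`. -/
def children (T : ParentTree V) (u : V) : Set V := {v | T.parent v = u ∧ v ≠ u}

/-- The set `T(u)` of descendants of `u` (including `u` itself). -/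
def desc (T : ParentTree V) (u : V) : Set V := {b | ∃ k, T.parent^[k] b = u}

/-- For a set `U` of siblings, `T(U) = ⋃_{u ∈ U} T(u)`. -/
def descU (T : ParentTree V) (U : Set V) : Set V := ⋃ u ∈ U, T.desc u

end ParentTree

/-- The set of points occurring in a list. -/
def listSet {V : Type} (l : List V) : Set V := {x | x ∈ l}

/-- The weight of a Hamiltonian cycle given as a list: the sum of distances
over cyclically consecutive pairs. -/
def cycleWeight {V X : Type} [MetricSpace X] (f : V → X) (h : List V) : ℝ :=
  ((h.zip (h.rotate 1)).map fun p => dist (f p.1) (f p.2)).sum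

/-- A Hamiltonian cycle on the point set: a cyclic ordering of all points,
represented as a duplicate-free list containing every point. -/
def IsHamCycle {V : Type} (h : List V) : Prop := h.Nodup ∧ ∀ x : V, x ∈ h

/-- The set `A` forms a contiguous cyclic arc of the cycle `h`. -/
def IsCyclicArc {V : Type} (A : Set V) (h : List V) : Prop :=
  ∃ i : ℕ, listSet ((h.rotate i).take A.ncard) = A

/-- A Hamiltonian cycle conforms to the rooted tree `T` if for every node `u`
the set `T(u)` of descendants of `u` forms a contiguous cyclic arc of the cycle. -/
def CycleConforms {V : Type} (T : ParentTree V) (h : List V) : Prop :=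
  ∀ u : V, IsCyclicArc (T.desc u) h

/-- Adjacency in the tree `T`. -/
def TreeAdj {V : Type} (T : ParentTree V) (a b : V) : Prop :=
  a ≠ b ∧ (T.parent a = b ∨ T.parent b = a)

/-- An Euler tour of the doubled tree of `T`: a closed walk
`w₀, w₁, …, w_{2(n−1)} = w₀` in which consecutive vertices are adjacent in `T`
and each edge of `T` is traversed exactly twice. -/
def IsEulerTour {V : Type} [Fintype V] [DecidableEq V] (T : ParentTree V)
    (t : List V) : Prop :=
  t.length = 2 * (Fintype.card V - 1) + 1 ∧
  t.head? = t.getLast? ∧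
  t.Chain' (TreeAdj T) ∧
  ∀ v : V, v ≠ T.root →
    (t.zip t.tail).countP
      (fun p => decide ((p.1 = v ∧ p.2 = T.parent v) ∨
        (p.1 = T.parent v ∧ p.2 = v))) = 2

/-- The Hamiltonian cycle `h` is obtained by shortcutting the Euler tour `t`:
the cyclic vertex sequence of `h` is a cyclic subsequence of
`w₀, w₁, …, w_{2(n−1)−1}`. -/
def IsShortcutting {V : Type} (h t : List V) : Prop :=
  ∃ i j : ℕ, (h.rotate i).Sublist (t.dropLast.rotate j)


namespace StmtAux
open List
section Lists
variable {α : Type*}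

def steps (l : List α) : List (α × α) := l.zip l.tail

def crossP (p : α → Bool) : α × α → Bool := fun q => p q.1 != p q.2

def lc (p : α → Bool) (l : List α) : ℕ := (steps l).countP (crossP p)

def cpairs (l : List α) : List (α × α) := l.zip (l.rotate 1)

def cc (p : α → Bool) (l : List α) : ℕ := (cpairs l).countP (crossP p)

@[simp] lemma steps_nil : steps ([] : List α) = [] := rfl
@[simp] lemma steps_single (a : α) : steps [a] = [] := rfl
@[simp] lemma steps_cons_cons (a b : α) (l : List α) :
    steps (a :: b :: l) = (a, b) :: steps (b :: l) := rfl

lemma steps_append (l m : List α) (x : α) :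
    steps (l ++ x :: m) = steps (l ++ [x]) ++ steps (x :: m) := by
  induction l with
  | nil => simp
  | cons a l ih =>
    cases l with
    | nil => simp
    | cons b l' =>
      simp only [cons_append, steps_cons_cons] at ih ⊢
      rw [ih]

lemma zip_tail_concat : ∀ (l : List α) (hl : l ≠ []) (x : α),
    l.zip (l.tail ++ [x]) = steps l ++ [(l.getLast hl, x)]
  | [], hl, _ => absurd rfl hl
  | [a], _, x => rfl
  | a :: b :: t, _, x => by
    have ih := zip_tail_concat (b :: t) (by simp) x
    show (a, b) :: (b :: t).zip (t ++ [x]) = _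
    rw [show (b :: t).zip (t ++ [x]) = (b :: t).zip ((b :: t).tail ++ [x]) from rfl, ih]
    simp [List.getLast]

lemma cpairs_eq (l : List α) (hl : l ≠ []) :
    cpairs l = steps l ++ [(l.getLast hl, l.head hl)] := by
  cases l with
  | nil => exact absurd rfl hl
  | cons a t =>
    have h1 : (a :: t).rotate 1 = t ++ [a] := by
      simpa using List.rotate_cons_succ t a 0
    simp only [cpairs, h1]
    have := zip_tail_concat (a :: t) (by simp) a
    simpa using this

lemma steps_concat (l : List α) (hl : l ≠ []) (x : α) :
    steps (l ++ [x]) = steps l ++ [(l.getLast hl, x)] := by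
  have h2 := steps_append l [] x
  -- steps (l ++ [x]) = steps (l ++ [x]) ++ steps [x]  -- trivial; instead direct induction
  clear h2
  induction l with
  | nil => exact absurd rfl hl
  | cons a l ih =>
    cases l with
    | nil => rfl
    | cons b l' =>
      simp only [cons_append, steps_cons_cons]
      have := ih (by simp)
      simp only [cons_append] at this
      rw [this]
      simp [List.getLast]


def d (p : α → Bool) (a b : α) : ℕ := if p a != p b then 1 else 0

variable (p : α → Bool)

@[simp] lemma lc_nil : lc p [] = 0 := rfl
@[simp] lemma lc_single (a : α) : lc p [a] = 0 := rfl
@[simp] lemma lc_cons_cons (a b : α) (l : List α) :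
    lc p (a :: b :: l) = d p a b + lc p (b :: l) := by
  simp only [lc, steps_cons_cons, countP_cons]
  exact Nat.add_comm _ _

@[simp] lemma cc_nil : cc p [] = 0 := rfl

lemma cc_eq_lc_add (l : List α) (hl : l ≠ []) :
    cc p l = lc p l + d p (l.getLast hl) (l.head hl) := by
  rw [cc, cpairs_eq l hl, countP_append]
  simp only [lc, countP_cons, countP_nil, Nat.zero_add]
  rfl

lemma lc_le_cc (l : List α) : lc p l ≤ cc p l := by
  cases l with
  | nil => simp
  | cons a t => rw [cc_eq_lc_add p _ (by simp : a :: t ≠ [])]; omega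

lemma cc_rotate_one (l : List α) : cc p (l.rotate 1) = cc p l := by
  cases l with
  | nil => simp
  | cons a t =>
    cases t with
    | nil => simp [List.rotate_singleton]
    | cons b t' =>
      have hrot : (a :: b :: t').rotate 1 = (b :: t') ++ [a] := by
        simpa using List.rotate_cons_succ (b :: t') a 0
      rw [hrot]
      have h1 : cpairs ((b :: t') ++ [a]) =
          (steps (b :: t') ++ [((b :: t').getLast (by simp), a)]) ++
            [(a, ((b :: t') ++ [a]).head (by simp))] := by
        rw [cpairs_eq ((b :: t') ++ [a]) (by simp), steps_concat (b :: t') (by simp) a]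
        simp
      have h2 : cpairs (a :: b :: t') =
          ((a, b) :: steps (b :: t')) ++ [((b :: t').getLast (by simp), a)] := by
        rw [cpairs_eq (a :: b :: t') (by simp)]
        simp [List.getLast]
      have h3 : ((b :: t') ++ [a]).head (by simp) = b := rfl
      rw [cc, cc, h1, h2, h3]
      simp only [countP_append, countP_cons, countP_nil]
      omega

lemma cc_rotate (l : List α) (n : ℕ) : cc p (l.rotate n) = cc p l := by
  induction n with
  | zero => simp [List.rotate_zero]
  | succ n ih =>
    have : l.rotate (n + 1) = (l.rotate n).rotate 1 := by
      rw [List.rotate_rotate]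
    rw [this, cc_rotate_one, ih]

lemma d_triangle (a b c : α) : d p a c ≤ d p a b + d p b c := by
  simp only [d]; cases p a <;> cases p b <;> cases p c <;> simp

lemma lc_cons_le (a : α) (l : List α) : lc p l ≤ lc p (a :: l) := by
  cases l with
  | nil => simp
  | cons b t => rw [lc_cons_cons]; omega

lemma lc_cons_triangle (a b : α) (l : List α) :
    lc p (a :: l) ≤ d p a b + lc p (b :: l) := by
  cases l with
  | nil => simp
  | cons c t =>
    rw [lc_cons_cons, lc_cons_cons]
    have := d_triangle p a b c
    omega

lemma lc_sublist_cons {l' l : List α} (hs : l'.Sublist l) :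
    ∀ a : α, lc p (a :: l') ≤ lc p (a :: l) := by
  induction hs with
  | slnil => intro a; exact le_refl _
  | cons b hs ih =>
    intro a
    calc lc p (a :: _) ≤ d p a b + lc p (b :: _) := by
          exact le_trans (ih a) (lc_cons_triangle p a b _)
      _ = lc p (a :: b :: _) := (lc_cons_cons p a b _).symm
  | cons_cons b hs ih =>
    intro a
    rw [lc_cons_cons, lc_cons_cons]
    exact Nat.add_le_add_left (ih b) _

lemma lc_sublist {l' l : List α} (hs : l'.Sublist l) : lc p l' ≤ lc p l := by
  induction hs with
  | slnil => exact le_refl _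
  | cons b hs ih => exact le_trans ih (lc_cons_le p b _)
  | cons_cons b hs ih => exact lc_sublist_cons p hs b

lemma bool_parity (x y z : Bool) :
    ((if x != y then (1:ℕ) else 0) + (if y != z then (1:ℕ) else 0)) % 2
      = (if x != z then (1:ℕ) else 0) % 2 := by
  cases x <;> cases y <;> cases z <;> rfl

lemma lc_parity : ∀ (l : List α) (hl : l ≠ []),
    lc p l % 2 = d p (l.head hl) (l.getLast hl) % 2
  | [], hl => absurd rfl hl
  | [a], _ => by simp [d]
  | a :: b :: t, _ => by
    have ih := lc_parity (b :: t) (by simp)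
    rw [lc_cons_cons]
    have hlast : (a :: b :: t).getLast (by simp) = (b :: t).getLast (by simp) := by
      simp [List.getLast]
    rw [hlast]
    simp only [List.head]  at ih ⊢
    rw [Nat.add_mod, ih, ← Nat.add_mod]
    exact bool_parity (p a) (p b) (p ((b :: t).getLast (by simp)))
  termination_by l => l.length

lemma cc_even (l : List α) : cc p l % 2 = 0 := by
  cases l with
  | nil => simp
  | cons a t =>
    rw [cc_eq_lc_add p _ (by simp : a :: t ≠ [])]
    have h1 := lc_parity p (a :: t) (by simp)
    rw [Nat.add_mod, h1, ← Nat.add_mod]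
    have : ∀ x y : Bool, ((if x != y then 1 else 0) + (if y != x then (1:ℕ) else 0)) % 2 = 0 := by
      decide
    simp only [d]
    exact this _ _

lemma all_eq_of_lc_zero : ∀ (l : List α) (hl : l ≠ []), lc p l = 0 →
    ∀ x ∈ l, p x = p (l.head hl)
  | [], hl, _ => absurd rfl hl
  | [a], _, _ => by simp
  | a :: b :: t, _, h0 => by
    rw [lc_cons_cons] at h0
    have hd : d p a b = 0 := by omega
    have hab : p a = p b := by simpa [d] using hd
    have ih := all_eq_of_lc_zero (b :: t) (by simp) (by omega)
    intro x hx
    rcases List.mem_cons.1 hx with rfl | hx'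
    · rfl
    · rw [ih x hx']; simp [List.head, hab.symm]
  termination_by l => l.length

lemma lc_eq_zero_of_const (c : Bool) : ∀ (l : List α), (∀ x ∈ l, p x = c) → lc p l = 0
  | [], _ => rfl
  | [a], _ => rfl
  | a :: b :: t, hc => by
    rw [lc_cons_cons]
    have ha := hc a (by simp)
    have hb := hc b (by simp)
    have ih := lc_eq_zero_of_const c (b :: t) (fun x hx => hc x (List.mem_cons_of_mem a hx))
    simp [d, ha, hb, ih]
  termination_by l => l.length

lemma dropWhile_false_of_lc_le_one : ∀ (l : List α), lc p l ≤ 1 →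
    (∀ x, l.head? = some x → p x = true) → ∀ y ∈ l.dropWhile p, p y = false
  | [], _, _ => by simp
  | a :: l, hlc, hhd => by
    have hpa : p a = true := hhd a rfl
    rw [List.dropWhile_cons_of_pos hpa]
    cases l with
    | nil => simp
    | cons b l' =>
      cases hpb : p b with
      | true =>
        have hdab : d p a b = 0 := by simp [d, hpa, hpb]
        rw [lc_cons_cons, hdab] at hlc
        exact dropWhile_false_of_lc_le_one (b :: l') (by omega)
          (fun x hx => by simp at hx; exact hx ▸ hpb)
      | false =>
        have hdab : d p a b = 1 := by simp [d, hpa, hpb]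
        rw [lc_cons_cons, hdab] at hlc
        have h0 : lc p (b :: l') = 0 := by omega
        have hall := all_eq_of_lc_zero p (b :: l') (by simp) h0
        rw [List.dropWhile_cons_of_neg (by simp [hpb])]
        intro y hy
        rw [hall y hy, List.head_cons]
        exact hpb
  termination_by l => l.length

lemma lc_two_blocks (g₁ g₂ : List α) (h₁ : ∀ x ∈ g₁, p x = true)
    (h₂ : ∀ x ∈ g₂, p x = false) : lc p (g₁ ++ g₂) ≤ 1 := by
  induction g₁ with
  | nil => simp [lc_eq_zero_of_const p false g₂ h₂]
  | cons a g₁' ih =>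
    cases g₁' with
    | nil =>
      cases g₂ with
      | nil => simp
      | cons b g₂' =>
        simp only [List.nil_append, List.singleton_append, lc_cons_cons]
        have : lc p (b :: g₂') = 0 :=
          lc_eq_zero_of_const p false _ h₂
        simp only [d]
        cases hx : (p a != p b) <;> simp [this]
    | cons b g₁'' =>
      have ha := h₁ a (by simp)
      have hb := h₁ b (by simp)
      have ih' := ih (fun x hx => h₁ x (List.mem_cons_of_mem a hx))
      simp only [List.cons_append] at ih' ⊢
      rw [lc_cons_cons]
      have : d p a b = 0 := by simp [d, ha, hb]
      omega

lemma chain'_cons_cons_iff (R : α → α → Prop) (a b : α) (t : List α) :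
    (a :: b :: t).Chain' R ↔ R a b ∧ (b :: t).Chain' R := List.isChain_cons_cons

lemma chain'_iff_steps (R : α → α → Prop) : ∀ l : List α,
    l.Chain' R ↔ ∀ q ∈ steps l, R q.1 q.2
  | [] => by simp [List.Chain']
  | [a] => by simp [List.Chain']
  | a :: b :: t => by
    rw [chain'_cons_cons_iff, steps_cons_cons, chain'_iff_steps R (b :: t)]
    constructor
    · rintro ⟨hab, hrest⟩ q hq
      rcases List.mem_cons.1 hq with rfl | hq'
      · exact hab
      · exact hrest q hq'
    · intro hall
      exact ⟨hall (a, b) (by simp), fun q hq => hall q (List.mem_cons_of_mem _ hq)⟩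
  termination_by l => l.length

lemma countP_eq_sum_map (c : α → Bool) (l : List α) :
    l.countP c = (l.map fun a => if c a then 1 else 0).sum := by
  induction l with
  | nil => rfl
  | cons a l ih =>
    rw [List.countP_cons, List.map_cons, List.sum_cons, ih]
    cases hc : c a <;> simp <;> omega

lemma length_eq_sum_countP {ι : Type*} (l : List α) (s : Finset ι) (pr : ι → α → Bool)
    (H : ∀ x ∈ l, ∃! v, v ∈ s ∧ pr v x = true) :
    l.length = ∑ v ∈ s, l.countP (pr v) := by
  induction l with
  | nil => simp
  | cons x l ih =>
    have Hl : ∀ y ∈ l, ∃! v, v ∈ s ∧ pr v y = true :=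
      fun y hy => H y (List.mem_cons_of_mem x hy)
    simp only [List.countP_cons]
    rw [Finset.sum_add_distrib]
    rw [← ih Hl]
    have hone : (∑ v ∈ s, if pr v x = true then 1 else 0) = 1 := by
      obtain ⟨v₀, ⟨hv₀s, hv₀p⟩, huniq⟩ := H x (by simp)
      classical
      rw [Finset.sum_boole]
      have hfilter : s.filter (fun v => pr v x = true) = {v₀} := by
        ext v
        simp only [Finset.mem_filter, Finset.mem_singleton]
        constructor
        · rintro ⟨hvs, hvp⟩; exact huniq v ⟨hvs, hvp⟩
        · rintro rfl; exact ⟨hv₀s, hv₀p⟩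
      rw [hfilter]
      simp
    rw [hone, List.length_cons]

end Lists

section Tree
variable {V : Type} (T : ParentTree V)
open ParentTree

lemma iterate_root (k : ℕ) : T.parent^[k] T.root = T.root :=
  Function.iterate_fixed T.parent_root k

lemma no_cycle {v : V} (hv : v ≠ T.root) {n : ℕ} (hn : 0 < n) :
    T.parent^[n] v ≠ v := by
  intro hcyc
  obtain ⟨K, hK⟩ := T.reaches_root v
  have hmul : ∀ j : ℕ, T.parent^[j * n] v = v := by
    intro j
    induction j with
    | zero => simp
    | succ j ih =>
      have : (j + 1) * n = j * n + n := by ring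
      rw [this, Function.iterate_add_apply, hcyc, ih]
  have hKn : K ≤ K * n := Nat.le_mul_of_pos_right K hn
  have : v = T.root := by
    calc v = T.parent^[K * n] v := (hmul K).symm
      _ = T.parent^[K * n - K] (T.parent^[K] v) := by
          rw [← Function.iterate_add_apply]
          congr 1
          omega
      _ = T.root := by rw [hK, iterate_root]
  exact hv this

lemma parent_ne_self {v : V} (hv : v ≠ T.root) : T.parent v ≠ v :=
  no_cycle T hv (by norm_num : (0:ℕ) < 1)

lemma eq_root_of_parent_eq {v : V} (hv : T.parent v = v) : v = T.root := by
  by_contra h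
  exact parent_ne_self T h hv

lemma mem_desc_self (u : V) : u ∈ T.desc u := ⟨0, rfl⟩

lemma desc_root : T.desc T.root = Set.univ := by
  ext v
  simp only [Set.mem_univ, iff_true]
  exact T.reaches_root v

lemma root_not_mem_desc {u : V} (hu : u ≠ T.root) : T.root ∉ T.desc u := by
  rintro ⟨k, hk⟩
  rw [iterate_root] at hk
  exact hu hk.symm

lemma parent_mem_desc {u x : V} (hx : x ∈ T.desc u) (hxu : x ≠ u) :
    T.parent x ∈ T.desc u := by
  obtain ⟨k, hk⟩ := hx
  cases k with
  | zero => exact absurd hk hxu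
  | succ k =>
    rw [Function.iterate_succ_apply] at hk
    exact ⟨k, hk⟩

lemma mem_desc_of_parent_mem {u x : V} (hx : T.parent x ∈ T.desc u) : x ∈ T.desc u := by
  obtain ⟨k, hk⟩ := hx
  exact ⟨k + 1, by rw [Function.iterate_succ_apply]; exact hk⟩

lemma parent_not_mem_desc {u : V} (hu : u ≠ T.root) : T.parent u ∉ T.desc u := by
  rintro ⟨k, hk⟩
  rw [← Function.iterate_succ_apply] at hk
  exact no_cycle T hu (Nat.succ_pos k) hk

lemma no_two_cycle {a b : V} (hab : a ≠ b) (h1 : T.parent a = b) (h2 : T.parent b = a) :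
    False := by
  obtain ⟨K, hK⟩ := T.reaches_root a
  have hmem : ∀ k, T.parent^[k] a = a ∨ T.parent^[k] a = b := by
    intro k
    induction k with
    | zero => left; rfl
    | succ k ih =>
      rw [Function.iterate_succ_apply']
      rcases ih with h | h <;> rw [h] <;> [right; left] <;> assumption
  rcases hmem K with h | h
  · have ha : a = T.root := by rw [hK] at h; exact h.symm
    apply hab
    rw [ha, T.parent_root] at h1
    exact ha.trans h1
  · have hb : b = T.root := by rw [hK] at h; exact h.symm
    apply hab
    rw [hb, T.parent_root] at h2
    exact h2.symm.trans hb.symm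

/-- An up-step `(x, parent x)` crosses the cut of `desc u` iff `x = u`. -/
lemma cross_up_iff {u x : V} (hu : u ≠ T.root) (hx : T.parent x ≠ x) :
    ((x ∈ T.desc u) ∧ T.parent x ∉ T.desc u) ↔ x = u := by
  constructor
  · rintro ⟨h1, h2⟩
    by_contra hne
    exact h2 (parent_mem_desc T h1 hne)
  · rintro rfl
    exact ⟨mem_desc_self T _, parent_not_mem_desc T hu⟩

lemma cross_down_impossible {u x : V} (h1 : x ∉ T.desc u) (h2 : T.parent x ∈ T.desc u) :
    False := h1 (mem_desc_of_parent_mem T h2)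

/-- Characterization of crossing steps for adjacent pairs. -/
lemma cross_iff_edge {u a b : V} (hu : u ≠ T.root) (hadj : TreeAdj T a b) :
    (¬ ((a ∈ T.desc u) ↔ (b ∈ T.desc u))) ↔
      ((a = u ∧ b = T.parent u) ∨ (a = T.parent u ∧ b = u)) := by
  obtain ⟨hab, hor⟩ := hadj
  constructor
  · intro hcross
    rcases hor with hpa | hpb
    · -- parent a = b
      left
      have hane : T.parent a ≠ a := by rw [hpa]; exact fun h => hab h.symm
      have : a ∈ T.desc u ∧ T.parent a ∉ T.desc u := by
        rw [hpa]
        by_cases h1 : a ∈ T.desc u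
        · exact ⟨h1, fun h2 => hcross ⟨fun _ => h2, fun _ => h1⟩⟩
        · exfalso
          by_cases h2 : b ∈ T.desc u
          · rw [← hpa] at h2
            exact cross_down_impossible T h1 h2
          · exact hcross ⟨fun h => absurd h h1, fun h => absurd h h2⟩
      have := (cross_up_iff T hu hane).1 this
      subst this
      exact ⟨rfl, hpa.symm⟩
    · -- parent b = a
      right
      have hbne : T.parent b ≠ b := by rw [hpb]; exact hab
      have : b ∈ T.desc u ∧ T.parent b ∉ T.desc u := by
        rw [hpb]
        by_cases h1 : b ∈ T.desc u
        · exact ⟨h1, fun h2 => hcross ⟨fun _ => h1, fun _ => h2⟩⟩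
        · exfalso
          by_cases h2 : a ∈ T.desc u
          · rw [← hpb] at h2
            exact cross_down_impossible T h1 h2
          · exact hcross ⟨fun h => absurd h h2, fun h => absurd h h1⟩
      have := (cross_up_iff T hu hbne).1 this
      subst this
      exact ⟨hpb.symm, rfl⟩
  · rintro (⟨rfl, rfl⟩ | ⟨rfl, rfl⟩) hiff
    · exact parent_not_mem_desc T hu (hiff.1 (mem_desc_self T a))
    · exact parent_not_mem_desc T hu (hiff.2 (mem_desc_self T b))

/-- Each tree-adjacent pair has a unique "child endpoint". -/
lemma unique_child [Fintype V] [DecidableEq V] {a b : V} (hadj : TreeAdj T a b) :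
    ∃! v, v ∈ (Finset.univ.erase T.root) ∧
      (((a = v ∧ b = T.parent v) ∨ (a = T.parent v ∧ b = v))) := by
  obtain ⟨hab, hor⟩ := hadj
  rcases hor with hpa | hpb
  · refine ⟨a, ⟨?_, Or.inl ⟨rfl, hpa.symm⟩⟩, ?_⟩
    · simp only [Finset.mem_erase, Finset.mem_univ, and_true]
      intro h
      rw [h, T.parent_root] at hpa
      exact hab (h.trans hpa)
    · rintro v ⟨hv, (⟨rfl, hb⟩ | ⟨ha, rfl⟩)⟩
      · rfl
      · exfalso
        exact no_two_cycle T hab hpa ha.symm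
  · refine ⟨b, ⟨?_, Or.inr ⟨hpb.symm, rfl⟩⟩, ?_⟩
    · simp only [Finset.mem_erase, Finset.mem_univ, and_true]
      intro h
      rw [h, T.parent_root] at hpb
      exact hab (hpb.symm.trans h.symm)
    · rintro v ⟨hv, (⟨rfl, hb⟩ | ⟨ha, rfl⟩)⟩
      · exfalso
        exact no_two_cycle T hab hb.symm hpb
      · rfl


end Tree
end StmtAux

namespace StmtAux
open List

lemma head_dropWhile {α : Type*} (q : α → Bool) : ∀ (l : List α) (x : α) (xs : List α),
    l.dropWhile q = x :: xs → q x = false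
  | [], x, xs, h => by simp at h
  | a :: l, x, xs, h => by
    by_cases ha : q a
    · rw [List.dropWhile_cons_of_pos ha] at h
      exact head_dropWhile q l x xs h
    · rw [List.dropWhile_cons_of_neg ha] at h
      cases h
      simpa using ha

section Arc

variable {V : Type} [Fintype V] [DecidableEq V]

lemma ham_length {h : List V} (hh : IsHamCycle h) : h.length = Fintype.card V := by
  have huniv : h.toFinset = Finset.univ :=
    Finset.eq_univ_iff_forall.2 fun x => List.mem_toFinset.2 (hh.2 x)
  rw [← List.toFinset_card_of_nodup hh.1, huniv, Finset.card_univ]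

lemma ham_ne_nil {h : List V} (hh : IsHamCycle h) (hn : 0 < Fintype.card V) : h ≠ [] := by
  intro hnil
  have h0 := ham_length hh
  rw [hnil] at h0
  simp at h0
  omega

open scoped Classical in
lemma arc_of_cc {h : List V} (hh : IsHamCycle h) (A : Set V)
    (hne : ∃ a, a ∈ A) (hpr : ∃ b, b ∉ A)
    (hcc : cc (fun x => decide (x ∈ A)) h = 2) : IsCyclicArc A h := by
  set p : V → Bool := fun x => decide (x ∈ A) with hp
  obtain ⟨a₀, ha₀⟩ := hne
  obtain ⟨b, hb⟩ := hpr
  obtain ⟨l₁, l₂, hsplit⟩ := List.append_of_mem (hh.2 b)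
  set m := l₁.length + 1 with hm
  set g0 : List V := l₂ ++ (l₁ ++ [b]) with hg0
  have hmlen : m ≤ h.length := by rw [hsplit]; simp [hm]
  have hrot : h.rotate m = g0 := by
    rw [List.rotate_eq_drop_append_take hmlen, hsplit]
    have h1 : l₁ ++ b :: l₂ = (l₁ ++ [b]) ++ l₂ := by simp
    have hm' : (l₁ ++ [b]).length = m := by simp [hm]
    rw [h1, List.drop_left' hm', List.take_left' hm']
  have hmemg0 : ∀ x : V, x ∈ g0 := by
    intro x
    rw [← hrot, List.mem_rotate]
    exact hh.2 x
  set q : V → Bool := fun x => !p x with hq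
  set tW := g0.takeWhile q with htW
  set dW := g0.dropWhile q with hdW
  have htd : tW ++ dW = g0 := List.takeWhile_append_dropWhile
  set k := tW.length with hk
  have hklen : k ≤ g0.length := by rw [← htd]; simp [hk]
  have hdWne : dW ≠ [] := by
    intro hdnil
    have hgt : g0 = tW := by rw [← htd, hdnil, List.append_nil]
    have ha0' := hmemg0 a₀
    rw [hgt] at ha0'
    have := List.mem_takeWhile_imp ha0'
    rw [hq] at this
    simp only [Bool.not_eq_eq_eq_not, Bool.not_true] at this
    rw [hp] at this
    simp only [decide_eq_false_iff_not] at this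
    exact this ha₀
  obtain ⟨x, xs, hdWcons⟩ := List.exists_cons_of_ne_nil hdWne
  have hpx : p x = true := by
    have := head_dropWhile q g0 x xs (hdW ▸ hdWcons)
    rw [hq] at this
    simpa using this
  set g := dW ++ tW with hg
  have hgrot : g0.rotate k = g := by
    rw [List.rotate_eq_drop_append_take hklen]
    rw [← htd, List.drop_left, List.take_left]
  have hgne : g ≠ [] := by
    rw [hg, hdWcons]; simp
  have hmemg : ∀ y : V, y ∈ g := by
    intro y
    rw [← hgrot, List.mem_rotate]
    exact hmemg0 y
  have hheadg : g.head hgne = x := by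
    have hgx : g = x :: (xs ++ tW) := by rw [hg, hdWcons]; simp
    have h? : g.head? = some x := by rw [hgx]; rfl
    rw [List.head?_eq_head hgne] at h?
    exact Option.some.inj h?
  have hlastg : p (g.getLast hgne) = false := by
    rcases List.eq_nil_or_concat tW with htnil | ⟨t', y, hty⟩
    · have hgeq : g = g0 := by rw [hg, htnil, List.append_nil, ← htd, htnil, List.nil_append]
      have hgb : g.getLast hgne = b := by
        have hgeq2 : g = (l₂ ++ l₁) ++ [b] := by rw [hgeq, hg0, List.append_assoc]
        rw [List.getLast_congr hgne (by simp) hgeq2, List.getLast_append_singleton]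
      rw [hgb, hp]
      simpa using hb
    · have htWne : tW ≠ [] := by rw [hty]; simp
      have h1 : g.getLast hgne = tW.getLast htWne := List.getLast_append_of_ne_nil hgne htWne
      have h2 : tW.getLast htWne ∈ tW := List.getLast_mem htWne
      obtain ⟨z, hz, hzeq⟩ : ∃ z, z ∈ tW ∧ z = tW.getLast htWne := ⟨_, h2, rfl⟩
      have hqz := List.mem_takeWhile_imp (htW ▸ hz)
      rw [h1, ← hzeq]
      rw [hq] at hqz
      simpa using hqz
  have hccg : cc p g = 2 := by
    rw [← hgrot, cc_rotate, ← hrot, cc_rotate]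
    exact hcc
  have hlcg : lc p g = 1 := by
    have hsum := cc_eq_lc_add p g hgne
    rw [hccg] at hsum
    have hd1 : d p (g.getLast hgne) (g.head hgne) = 1 := by
      rw [d, hlastg, hheadg, hpx]
      rfl
    omega
  have hblock : ∀ y ∈ g.dropWhile p, p y = false := by
    apply dropWhile_false_of_lc_le_one p g (by omega)
    intro y hy
    rw [List.head?_eq_head hgne] at hy
    cases hy
    rw [← hheadg] at hpx
    exact hpx
  set tW' := g.takeWhile p with htW'
  set dW' := g.dropWhile p with hdW'
  have htd' : tW' ++ dW' = g := List.takeWhile_append_dropWhile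
  have hsetT : ∀ y ∈ tW', y ∈ A := by
    intro y hy
    have := List.mem_takeWhile_imp (htW' ▸ hy)
    rw [hp] at this
    simpa using this
  have hsetA : ∀ y ∈ A, y ∈ tW' := by
    intro y hy
    have hyg : y ∈ tW' ++ dW' := htd' ▸ hmemg y
    rcases List.mem_append.1 hyg with hcase | hcase
    · exact hcase
    · exfalso
      have := hblock y (hdW' ▸ hcase)
      rw [hp] at this
      simp only [decide_eq_false_iff_not] at this
      exact this hy
  have hnodupg : g.Nodup := by
    have hperm : (h.rotate m).rotate k ~ h :=
      ((h.rotate m).rotate_perm k).trans (h.rotate_perm m)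
    rw [hrot, hgrot] at hperm
    exact hperm.nodup_iff.2 hh.1
  have hnodupT : tW'.Nodup := by
    have hsub : tW' <+ g := htd' ▸ List.sublist_append_left tW' dW'
    exact hsub.nodup hnodupg
  have hlenT : tW'.length = A.ncard := by
    have hfin : tW'.toFinset = A.toFinset := by
      ext y
      rw [List.mem_toFinset, Set.mem_toFinset]
      exact ⟨hsetT y, hsetA y⟩
    rw [← List.toFinset_card_of_nodup hnodupT, hfin, Set.ncard_eq_toFinset_card']
  refine ⟨m + k, ?_⟩
  have hgrot2 : h.rotate (m + k) = g := by
    rw [← List.rotate_rotate, hrot, hgrot]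
  rw [hgrot2, ← hlenT, ← htd', List.take_left]
  ext y
  simp only [listSet, Set.mem_setOf_eq]
  exact ⟨hsetT y, hsetA y⟩

open scoped Classical in
lemma cc_of_arc {h : List V} (hh : IsHamCycle h) (A : Set V)
    {a b : V} (ha : a ∈ A) (hb : b ∉ A)
    (harc : IsCyclicArc A h) : cc (fun x => decide (x ∈ A)) h = 2 := by
  set p : V → Bool := fun x => decide (x ∈ A) with hp
  obtain ⟨i, hset⟩ := harc
  set g := h.rotate i with hgdef
  set tW := g.take A.ncard with htW
  set dW := g.drop A.ncard with hdW
  have htd : tW ++ dW = g := List.take_append_drop _ _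
  have hmemg : ∀ x : V, x ∈ g := fun x => List.mem_rotate.2 (hh.2 x)
  have hnodupg : g.Nodup := (h.rotate_perm i).nodup_iff.2 hh.1
  have h1 : ∀ y ∈ tW, p y = true := by
    intro y hy
    have : y ∈ A := by rw [← hset]; exact hy
    rw [hp]; simpa using this
  have h2 : ∀ y ∈ dW, p y = false := by
    intro y hy
    rw [hp]
    simp only [decide_eq_false_iff_not]
    intro hyA
    have hytW : y ∈ tW := by rw [← hset] at hyA; exact hyA
    have hdisj := List.disjoint_of_nodup_append (htd ▸ hnodupg)
    exact hdisj hytW hy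
  have hgne : g ≠ [] := by
    intro hnil
    have := hmemg a
    rw [hnil] at this
    simp at this
  have hlc : lc p g ≤ 1 := by
    rw [← htd]
    exact lc_two_blocks p tW dW h1 h2
  have hcc2 : cc p g ≤ 2 := by
    rw [cc_eq_lc_add p g hgne]
    have : d p (g.getLast hgne) (g.head hgne) ≤ 1 := by
      rw [d]; split <;> omega
    omega
  have hccne : cc p g ≠ 0 := by
    intro h0
    have hlc0 : lc p g = 0 := by
      have := lc_le_cc p g
      omega
    have hall := all_eq_of_lc_zero p g hgne hlc0
    have hpa := hall a (hmemg a)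
    have hpb := hall b (hmemg b)
    rw [← hpb] at hpa
    rw [hp] at hpa
    simp only [decide_eq_decide] at hpa
    exact hb (hpa.1 ha)
  have heven := cc_even p g
  have hcg : cc p g = 2 := by omega
  rw [← cc_rotate p h i]
  exact hcg

end Arc
end StmtAux


namespace StmtAux
open List

variable {V : Type} [Fintype V] [DecidableEq V]

open scoped Classical in
lemma conforms_of_shortcut (T : ParentTree V) (hn : 3 ≤ Fintype.card V)
    {h t : List V} (hh : IsHamCycle h) (ht : IsEulerTour T t)
    (hs : IsShortcutting h t) : CycleConforms T h := by
  intro u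
  by_cases hu : u = T.root
  · subst hu
    rw [desc_root]
    refine ⟨0, ?_⟩
    rw [List.rotate_zero]
    have hncard : (Set.univ : Set V).ncard = h.length := by
      rw [Set.ncard_univ, Nat.card_eq_fintype_card, ham_length hh]
    rw [hncard, List.take_length]
    ext y
    simp only [listSet, Set.mem_setOf_eq, Set.mem_univ, iff_true]
    exact hh.2 y
  · obtain ⟨hlen, hcl, hch, hcnt⟩ := ht
    obtain ⟨i, j, hsub⟩ := hs
    set p : V → Bool := fun x => decide (x ∈ T.desc u) with hp
    have htne : t ≠ [] := by
      intro hnil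
      rw [hnil] at hlen
      simp at hlen
    set l := t.dropLast with hl
    have hlne : l ≠ [] := by
      intro hnil
      have h1 : l.length = t.length - 1 := List.length_dropLast
      rw [hnil, hlen] at h1
      simp at h1
      omega
    have hteq : l ++ [t.getLast htne] = t := List.dropLast_append_getLast htne
    have hhead : l.head hlne = t.getLast htne := by
      have h1 : t.head? = some (t.getLast htne) := by
        rw [hcl]
        exact List.getLast?_eq_getLast htne
      have h2 : t.head? = l.head? := by
        conv_lhs => rw [← hteq]
        exact List.head?_append_of_ne_nil l hlne
      rw [List.head?_eq_head hlne] at h2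
      rw [h2] at h1
      exact Option.some.inj h1
    have hsteps : steps t = steps l ++ [(l.getLast hlne, t.getLast htne)] := by
      conv_lhs => rw [← hteq]
      exact steps_concat l hlne _
    have hcp : cpairs l = steps t := by
      rw [cpairs_eq l hlne, hhead, hsteps]
    have hadj : ∀ q ∈ steps t, TreeAdj T q.1 q.2 := (chain'_iff_steps (TreeAdj T) t).1 hch
    have hccl : cc p l = 2 := by
      rw [cc, hcp]
      rw [List.countP_congr (q := fun q : V × V =>
        decide ((q.1 = u ∧ q.2 = T.parent u) ∨ (q.1 = T.parent u ∧ q.2 = u)))]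
      · exact hcnt u hu
      · intro q hq
        have hq' := hadj q hq
        simp only [crossP, bne_iff_ne, ne_eq, hp, decide_eq_decide, decide_eq_true_eq]
        exact cross_iff_edge T hu hq'
    have hccrot : cc p (l.rotate j) = 2 := by rw [cc_rotate]; exact hccl
    have hlc2 : lc p (h.rotate i) ≤ 2 :=
      le_trans (lc_sublist p hsub) (le_trans (lc_le_cc p _) (le_of_eq hccrot))
    have hgne : h.rotate i ≠ [] := by
      intro hnil
      have := (List.mem_rotate (n := i)).2 (hh.2 u)
      rw [hnil] at this
      simp at this
    have hccle : cc p (h.rotate i) ≤ 3 := by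
      rw [cc_eq_lc_add p _ hgne]
      have : d p ((h.rotate i).getLast hgne) ((h.rotate i).head hgne) ≤ 1 := by
        rw [d]; split <;> omega
      omega
    have heven := cc_even p (h.rotate i)
    have hne0 : cc p (h.rotate i) ≠ 0 := by
      intro h0
      have hlc0 : lc p (h.rotate i) = 0 := by
        have := lc_le_cc p (h.rotate i)
        omega
      have hall := all_eq_of_lc_zero p _ hgne hlc0
      have hpu := hall u (List.mem_rotate.2 (hh.2 u))
      have hpr := hall T.root (List.mem_rotate.2 (hh.2 T.root))
      rw [← hpr] at hpu
      rw [hp] at hpu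
      simp only [decide_eq_decide] at hpu
      exact root_not_mem_desc T hu (hpu.1 (mem_desc_self T u))
    have hcc2 : cc p (h.rotate i) = 2 := by omega
    have hcch : cc p h = 2 := by rw [← cc_rotate p h i]; exact hcc2
    exact arc_of_cc hh (T.desc u) ⟨u, mem_desc_self T u⟩
      ⟨T.root, root_not_mem_desc T hu⟩ hcch

end StmtAux


namespace StmtAux
open List

section RangeMap
variable {α : Type*}

lemma range_map_succ (f : ℕ → α) (j : ℕ) :
    (List.range (j+1)).map f = (List.range j).map f ++ [f j] := by
  rw [List.range_succ, List.map_append]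
  rfl

lemma steps_range_map (f : ℕ → α) : ∀ j : ℕ,
    steps ((List.range (j+1)).map f) = (List.range j).map fun i => (f i, f (i+1))
  | 0 => by simp [List.range_succ]
  | j+1 => by
    have h1 := range_map_succ f (j+1)
    have hne : (List.range (j+1)).map f ≠ [] := by simp
    rw [h1, steps_concat _ hne (f (j+1)), steps_range_map f j]
    have hlast : ((List.range (j+1)).map f).getLast hne = f j := by
      rw [List.getLast_congr hne (by simp) (range_map_succ f j)]
      exact List.getLast_append_singleton _
    rw [hlast, range_map_succ (fun i => (f i, f (i+1))) j]

lemma steps_up_down (f g : ℕ → α) (k m : ℕ) (hlink : f k = g 0) :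
    steps ((List.range k).map f ++ (List.range (m+1)).map g)
      = ((List.range k).map fun i => (f i, f (i+1)))
        ++ ((List.range m).map fun j => (g j, g (j+1))) := by
  cases k with
  | zero => simp [steps_range_map g m]
  | succ k' =>
    have hD : (List.range (m+1)).map g = g 0 :: ((List.range m).map fun j => g (j+1)) := by
      rw [List.range_succ_eq_map]
      simp [Function.comp]
    rw [hD, steps_append]
    congr 1
    · have h2 : (List.range (k'+1)).map f ++ [g 0] = (List.range (k'+1+1)).map f := by
        rw [range_map_succ f (k'+1), hlink]
      rw [h2, steps_range_map]
    · rw [← hD, steps_range_map]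

lemma countP_eq_one_unique (l : List α) (hnd : l.Nodup) (cp : α → Bool) (x : α)
    (hx : x ∈ l) (hcx : cp x = true) (huniq : ∀ y ∈ l, cp y = true → y = x) :
    l.countP cp = 1 := by
  obtain ⟨l₁, l₂, rfl⟩ := List.append_of_mem hx
  have hx1 : x ∉ l₁ := by
    intro hmem
    have hdisj := List.disjoint_of_nodup_append hnd
    exact hdisj hmem (List.mem_cons_self)
  have hx2 : x ∉ l₂ := by
    have : (x :: l₂).Nodup := ((List.sublist_append_right l₁ (x :: l₂)).nodup hnd)
    exact (List.nodup_cons.1 this).1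
  rw [List.countP_append, List.countP_cons]
  have h1 : l₁.countP cp = 0 := by
    rw [List.countP_eq_zero]
    intro y hy hcy
    exact hx1 (huniq y (by simp [hy]) hcy ▸ hy)
  have h2 : l₂.countP cp = 0 := by
    rw [List.countP_eq_zero]
    intro y hy hcy
    exact hx2 (huniq y (by simp [hy]) hcy ▸ hy)
  rw [h1, h2, hcx]
  rfl

end RangeMap

section Path
open scoped Classical
variable {V : Type} (T : ParentTree V)

lemma lcaEx (a b : V) : ∃ k, ∃ m, T.parent^[m] b = T.parent^[k] a := by
  obtain ⟨k₀, hk⟩ := T.reaches_root a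
  obtain ⟨m₀, hm⟩ := T.reaches_root b
  exact ⟨k₀, m₀, hm.trans hk.symm⟩

noncomputable def kk (a b : V) : ℕ := Nat.find (lcaEx T a b)
noncomputable def mm (a b : V) : ℕ := Nat.find (Nat.find_spec (lcaEx T a b))

lemma lca_spec (a b : V) : T.parent^[mm T a b] b = T.parent^[kk T a b] a :=
  Nat.find_spec (Nat.find_spec (lcaEx T a b))

lemma kk_min {a b : V} {k' : ℕ} (h : k' < kk T a b) :
    ¬ ∃ m, T.parent^[m] b = T.parent^[k'] a :=
  Nat.find_min (lcaEx T a b) h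

lemma mm_min {a b : V} {m' : ℕ} (h : m' < mm T a b) :
    T.parent^[m'] b ≠ T.parent^[kk T a b] a :=
  Nat.find_min (Nat.find_spec (lcaEx T a b)) h

/-- The tree path from `a` to `b`: up from `a` to the lca, then down to `b`. -/
noncomputable def path (a b : V) : List V :=
  ((List.range (kk T a b)).map fun i => T.parent^[i] a) ++
    ((List.range (mm T a b + 1)).map fun j => T.parent^[mm T a b - j] b)

lemma steps_path (a b : V) :
    steps (path T a b) =
      ((List.range (kk T a b)).map fun i => (T.parent^[i] a, T.parent^[i+1] a))
        ++ ((List.range (mm T a b)).map fun j =>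
              (T.parent^[mm T a b - j] b, T.parent^[mm T a b - (j+1)] b)) := by
  exact steps_up_down _ _ _ _ (by simpa using (lca_spec T a b).symm)

lemma path_eq_cons (a b : V) : ∃ r, path T a b = a :: r ∧ (a ≠ b → r ≠ []) := by
  rcases Nat.eq_zero_or_pos (kk T a b) with hk | hk
  · have h0 : T.parent^[mm T a b] b = a := by
      have := lca_spec T a b
      rw [hk] at this
      simpa using this
    have hD : path T a b
        = T.parent^[mm T a b] b :: ((List.range (mm T a b)).map fun j => T.parent^[mm T a b - (j+1)] b) := by
      rw [path, hk]
      simp only [List.range_zero, List.map_nil, List.nil_append]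
      rw [List.range_succ_eq_map]
      simp [Function.comp]
    refine ⟨_, by rw [hD, h0], ?_⟩
    intro hab hnil
    simp only [List.map_eq_nil_iff, List.range_eq_nil] at hnil
    rw [hnil] at h0
    simp only [Function.iterate_zero, id_eq] at h0
    exact hab h0.symm
  · obtain ⟨k', hk'⟩ : ∃ k', kk T a b = k' + 1 := ⟨kk T a b - 1, by omega⟩
    have hU : (List.range (kk T a b)).map (fun i => T.parent^[i] a)
        = a :: ((List.range k').map ((fun i => T.parent^[i] a) ∘ Nat.succ)) := by
      rw [hk', List.range_succ_eq_map, List.map_cons, List.map_map]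
      rfl
    refine ⟨_, by rw [path, hU, List.cons_append], ?_⟩
    intro _ hnil
    simp at hnil

lemma path_ne_nil (a b : V) : path T a b ≠ [] := by
  obtain ⟨r, hr, _⟩ := path_eq_cons T a b
  rw [hr]
  simp

lemma path_getLast (a b : V) : (path T a b).getLast (path_ne_nil T a b) = b := by
  have hsplit : path T a b
      = (((List.range (kk T a b)).map fun i => T.parent^[i] a)
          ++ ((List.range (mm T a b)).map fun j => T.parent^[mm T a b - j] b))
        ++ [T.parent^[mm T a b - mm T a b] b] := by
    rw [path, range_map_succ (fun j => T.parent^[mm T a b - j] b) (mm T a b),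
      List.append_assoc]
  rw [List.getLast_congr _ (by simp) hsplit, List.getLast_append_singleton]
  simp

lemma iterate_inj_at {v : V} (hv : v ≠ T.root) {x : V} {i j : ℕ}
    (hi : T.parent^[i] x = v) (hj : T.parent^[j] x = v) : i = j := by
  rcases lt_trichotomy i j with h | h | h
  · exfalso
    have : T.parent^[j - i] v = v := by
      rw [← hi, ← Function.iterate_add_apply]
      rw [show j - i + i = j by omega, hj]
      exact hi.symm
    exact no_cycle T hv (by omega) this
  · exact h
  · exfalso
    have : T.parent^[i - j] v = v := by
      rw [← hj, ← Function.iterate_add_apply]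
      rw [show i - j + j = i by omega, hi]
      exact hj.symm
    exact no_cycle T hv (by omega) this

lemma edge_up_iff {v : V} (hv : v ≠ T.root) (c : V) :
    ((c = v ∧ T.parent c = T.parent v) ∨ (c = T.parent v ∧ T.parent c = v)) ↔ c = v := by
  constructor
  · rintro (⟨h, -⟩ | ⟨h1, h2⟩)
    · exact h
    · exfalso
      exact no_two_cycle T (fun he => parent_ne_self T hv he.symm) rfl
        (by rw [← h1]; exact h2)
  · rintro rfl
    exact Or.inl ⟨rfl, rfl⟩

lemma edge_down_iff {v : V} (hv : v ≠ T.root) (c : V) :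
    ((T.parent c = v ∧ c = T.parent v) ∨ (T.parent c = T.parent v ∧ c = v)) ↔ c = v := by
  constructor
  · rintro (⟨h1, h2⟩ | ⟨-, h⟩)
    · exfalso
      exact no_two_cycle T (fun he => parent_ne_self T hv (by rw [← h2, ← he])) h2.symm h1
    · exact h
  · rintro rfl
    exact Or.inr ⟨rfl, rfl⟩

lemma path_steps_adj (a b : V) : ∀ q ∈ steps (path T a b), TreeAdj T q.1 q.2 := by
  intro q hq
  rw [steps_path] at hq
  rcases List.mem_append.1 hq with hq' | hq' <;> obtain ⟨i, hi, rfl⟩ := List.mem_map.1 hq'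
  · have hi' := List.mem_range.1 hi
    have hpar : T.parent^[i+1] a = T.parent (T.parent^[i] a) :=
      Function.iterate_succ_apply' T.parent i a
    have hne : T.parent (T.parent^[i] a) ≠ T.parent^[i] a := by
      intro heq
      have hroot : T.parent^[i] a = T.root := eq_root_of_parent_eq T heq
      obtain ⟨m₀, hm₀⟩ := T.reaches_root b
      exact kk_min T hi' ⟨m₀, by rw [hm₀, hroot]⟩
    refine ⟨?_, Or.inl ?_⟩
    · simp only
      rw [hpar]
      exact fun hx => hne hx.symm
    · simp only
      rw [hpar]
  · have hi' := List.mem_range.1 hi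
    have harith : mm T a b - i = (mm T a b - (i+1)) + 1 := by omega
    have hpar : T.parent^[mm T a b - i] b = T.parent (T.parent^[mm T a b - (i+1)] b) := by
      rw [harith, Function.iterate_succ_apply']
    have hne : T.parent (T.parent^[mm T a b - (i+1)] b) ≠ T.parent^[mm T a b - (i+1)] b := by
      intro heq
      have hroot : T.parent^[mm T a b - (i+1)] b = T.root := eq_root_of_parent_eq T heq
      apply mm_min T (show mm T a b - (i+1) < mm T a b by omega)
      rw [hroot, ← lca_spec T a b]
      have : T.parent^[mm T a b] b
          = T.parent^[mm T a b - (mm T a b - (i+1))] (T.parent^[mm T a b - (i+1)] b) := by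
        rw [← Function.iterate_add_apply]
        congr 1
        omega
      rw [this, hroot, iterate_root]
    refine ⟨?_, Or.inr ?_⟩
    · simp only
      rw [hpar]
      exact hne
    · simp only
      rw [hpar]

open scoped Classical in
lemma path_count {v : V} (hv : v ≠ T.root) (ep : V × V → Bool)
    (hep : ∀ qq : V × V, ep qq = true ↔
      ((qq.1 = v ∧ qq.2 = T.parent v) ∨ (qq.1 = T.parent v ∧ qq.2 = v)))
    (a b : V) :
    (steps (path T a b)).countP ep = d (fun x => decide (x ∈ T.desc v)) a b := by
  set k := kk T a b with hkdef
  set m := mm T a b with hmdef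
  rw [steps_path, List.countP_append, List.countP_map, List.countP_map]
  have hup : (List.range k).countP
      (ep ∘ (fun i => (T.parent^[i] a, T.parent^[i+1] a)))
      = if a ∈ T.desc v ∧ b ∉ T.desc v then 1 else 0 := by
    have hpred : ∀ i : ℕ,
        (ep ∘ (fun i => (T.parent^[i] a, T.parent^[i+1] a))) i = true
          ↔ T.parent^[i] a = v := by
      intro i
      simp only [Function.comp_apply]
      rw [hep]
      simp only
      rw [Function.iterate_succ_apply' T.parent i a]
      exact edge_up_iff T hv (T.parent^[i] a)
    by_cases hex : ∃ i, i < k ∧ T.parent^[i] a = v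
    · obtain ⟨i₀, hi₀k, hi₀⟩ := hex
      have hif : (a ∈ T.desc v ∧ b ∉ T.desc v) := by
        constructor
        · exact ⟨i₀, hi₀⟩
        · rintro ⟨mb, hmb⟩
          exact kk_min T hi₀k ⟨mb, by rw [hmb, hi₀]⟩
      rw [if_pos hif]
      apply countP_eq_one_unique _ List.nodup_range _ i₀ (List.mem_range.2 hi₀k)
      · rw [hpred i₀]
        exact hi₀
      · intro y _ hcy
        rw [hpred y] at hcy
        exact iterate_inj_at T hv hcy hi₀
    · have hif : ¬ (a ∈ T.desc v ∧ b ∉ T.desc v) := by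
        rintro ⟨⟨ia, hia⟩, hbnot⟩
        have hiak : ¬ ia < k := fun hlt => hex ⟨ia, hlt, hia⟩
        apply hbnot
        refine ⟨ia - k + m, ?_⟩
        rw [Function.iterate_add_apply, lca_spec T a b, ← Function.iterate_add_apply]
        rw [show ia - k + k = ia by omega]
        exact hia
      rw [if_neg hif]
      rw [List.countP_eq_zero]
      intro i hi hci
      rw [hpred i] at hci
      exact hex ⟨i, List.mem_range.1 hi, hci⟩
  have hdown : (List.range m).countP
      (ep ∘ (fun j => (T.parent^[m - j] b, T.parent^[m - (j+1)] b)))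
      = if b ∈ T.desc v ∧ a ∉ T.desc v then 1 else 0 := by
    have hpred : ∀ j : ℕ, j < m →
        ((ep ∘ (fun j => (T.parent^[m - j] b, T.parent^[m - (j+1)] b))) j = true
          ↔ T.parent^[m - (j+1)] b = v) := by
      intro j hj
      simp only [Function.comp_apply]
      rw [hep]
      simp only
      have harith : m - j = (m - (j+1)) + 1 := by omega
      rw [harith, Function.iterate_succ_apply' T.parent _ b]
      exact edge_down_iff T hv (T.parent^[m - (j+1)] b)
    by_cases hex : ∃ j, j < m ∧ T.parent^[m - (j+1)] b = v
    · obtain ⟨j₀, hj₀m, hj₀⟩ := hex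
      have hif : (b ∈ T.desc v ∧ a ∉ T.desc v) := by
        constructor
        · exact ⟨m - (j₀+1), hj₀⟩
        · rintro ⟨ia, hia⟩
          have hiak : ¬ ia < k := by
            intro hlt
            exact kk_min T hlt ⟨m - (j₀+1), by rw [hj₀, hia]⟩
          have h1 : T.parent^[ia - k + m] b = v := by
            rw [Function.iterate_add_apply, lca_spec T a b, ← Function.iterate_add_apply]
            rw [show ia - k + k = ia by omega]
            exact hia
          have h2 := iterate_inj_at T hv h1 hj₀
          omega
      rw [if_pos hif]
      apply countP_eq_one_unique _ List.nodup_range _ j₀ (List.mem_range.2 hj₀m)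
      · rw [hpred j₀ hj₀m]
        exact hj₀
      · intro y hy hcy
        rw [hpred y (List.mem_range.1 hy)] at hcy
        have := iterate_inj_at T hv hcy hj₀
        have hym := List.mem_range.1 hy
        omega
    · have hif : ¬ (b ∈ T.desc v ∧ a ∉ T.desc v) := by
        rintro ⟨⟨jb, hjb⟩, hanot⟩
        have hjbm : ¬ jb < m := by
          intro hlt
          exact hex ⟨m - (jb+1), by omega, by rw [show m - (m - (jb+1) + 1) = jb by omega]; exact hjb⟩
        apply hanot
        refine ⟨jb - m + k, ?_⟩
        rw [Function.iterate_add_apply, ← lca_spec T a b, ← Function.iterate_add_apply]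
        rw [show jb - m + m = jb by omega]
        exact hjb
      rw [if_neg hif]
      rw [List.countP_eq_zero]
      intro j hj hcj
      rw [hpred j (List.mem_range.1 hj)] at hcj
      exact hex ⟨j, List.mem_range.1 hj, hcj⟩
  rw [hup, hdown, d]
  by_cases ha : a ∈ T.desc v <;> by_cases hb : b ∈ T.desc v <;> simp [ha, hb]

end Path
end StmtAux


namespace StmtAux
open List

section Glue
variable {V : Type} (T : ParentTree V)
open scoped Classical

lemma chain'_zip_tail : ∀ (l : List V) (x : V),
    List.Chain' (fun q q' : V × V => q.2 = q'.1) (l.zip (l.tail ++ [x]))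
  | [], _ => by simp [List.Chain']
  | [_], _ => by simp [List.Chain']
  | a :: b :: t, x => by
    have ih := chain'_zip_tail (b :: t) x
    cases t with
    | nil =>
      exact List.isChain_cons_cons.2 ⟨rfl, List.isChain_singleton _⟩
    | cons c t' =>
      exact List.isChain_cons_cons.2 ⟨rfl, ih⟩

lemma piece_cons (a b : V) (hab : a ≠ b) : ∃ s, (path T a b).dropLast = a :: s := by
  obtain ⟨r, hr, hrne⟩ := path_eq_cons T a b
  obtain ⟨c, r', hcr⟩ := List.exists_cons_of_ne_nil (hrne hab)
  refine ⟨(c :: r').dropLast, ?_⟩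
  rw [hr, hcr]
  rfl

lemma steps_glue : ∀ (L : List (V × V)) (x : V),
    (∀ q ∈ L, q.1 ≠ q.2) →
    List.Chain' (fun q q' : V × V => q.2 = q'.1) L →
    (∀ (hL : L ≠ []), (L.getLast hL).2 = x) →
    steps ((L.map fun q => (path T q.1 q.2).dropLast).flatten ++ [x])
      = (L.map fun q => steps (path T q.1 q.2)).flatten
  | [], x, _, _, _ => by simp
  | q :: L', x, hne, hch, hlast => by
    have hq12 : q.1 ≠ q.2 := hne q (by simp)
    have hPeq : (path T q.1 q.2).dropLast ++ [q.2] = path T q.1 q.2 := by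
      conv_rhs => rw [← List.dropLast_append_getLast (path_ne_nil T q.1 q.2)]
      rw [path_getLast]
    have hrest : ∃ ys, (L'.map fun q => (path T q.1 q.2).dropLast).flatten ++ [x]
        = q.2 :: ys := by
      cases L' with
      | nil =>
        have hx : q.2 = x := hlast (by simp)
        exact ⟨[], by simp [hx]⟩
      | cons q' L'' =>
        have hq' : q'.1 ≠ q'.2 := hne q' (by simp)
        obtain ⟨s, hs⟩ := piece_cons T q'.1 q'.2 hq'
        have hqq' : q.2 = q'.1 := (List.isChain_cons_cons.1 hch).1
        refine ⟨s ++ ((L''.map fun q => (path T q.1 q.2).dropLast).flatten ++ [x]), ?_⟩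
        rw [List.map_cons, List.flatten_cons, hs, hqq']
        simp
    obtain ⟨ys, hys⟩ := hrest
    have ih := steps_glue L' x (fun q hq => hne q (List.mem_cons_of_mem _ hq))
      (List.isChain_cons.1 hch).2
      (fun hL' => by
        have := hlast (by simp)
        rwa [List.getLast_cons hL'] at this)
    rw [List.map_cons, List.flatten_cons, List.append_assoc, hys,
      steps_append _ ys q.2, hPeq, ← hys, ih, List.map_cons, List.flatten_cons]

lemma ham_sublist_glue : ∀ (L : List (V × V)), (∀ q ∈ L, q.1 ≠ q.2) →
    (L.map Prod.fst).Sublist ((L.map fun q => (path T q.1 q.2).dropLast).flatten)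
  | [], _ => by simp
  | q :: L', hne => by
    obtain ⟨s, hs⟩ := piece_cons T q.1 q.2 (hne q (by simp))
    rw [List.map_cons, List.map_cons, List.flatten_cons, hs, List.cons_append]
    refine List.Sublist.cons₂ q.1 ?_
    exact (ham_sublist_glue L' (fun q hq => hne q (List.mem_cons_of_mem _ hq))).trans
      (List.sublist_append_right s _)

end Glue

section Main
variable {V : Type} [Fintype V] [DecidableEq V]

open scoped Classical in
lemma exists_tour (T : ParentTree V) (hn : 3 ≤ Fintype.card V) {h : List V}
    (hh : IsHamCycle h) (hconf : CycleConforms T h) :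
    ∃ t : List V, IsEulerTour T t ∧ IsShortcutting h t := by
  have hlen := ham_length hh
  have hne : h ≠ [] := by
    intro hnil
    rw [hnil] at hlen
    simp at hlen
    omega
  obtain ⟨e, h₂, rfl⟩ := List.exists_cons_of_ne_nil hne
  have hh₂ne : h₂ ≠ [] := by
    intro hnil
    rw [hnil] at hlen
    simp at hlen
    omega
  set L := cpairs (e :: h₂) with hL
  have hzip : cpairs (e :: h₂) = (e :: h₂).zip (h₂ ++ [e]) := by
    rw [cpairs]
    congr 1
    simpa using List.rotate_cons_succ h₂ e 0
  have hcne : (e :: h₂ : List V) ≠ [] := by simp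
  have hLeq : L = steps (e :: h₂) ++ [((e :: h₂).getLast hcne, e)] := by
    rw [hL, cpairs_eq _ hcne]
    rfl
  have hLne : ∀ q ∈ L, q.1 ≠ q.2 := by
    intro q hq
    rw [hLeq] at hq
    rcases List.mem_append.1 hq with hq' | hq'
    · have hchain : List.Chain' (· ≠ ·) (e :: h₂) := List.Pairwise.isChain hh.1
      exact (chain'_iff_steps _ _).1 hchain q hq'
    · simp only [List.mem_singleton] at hq'
      subst hq'
      simp only
      rw [List.getLast_cons hh₂ne]
      intro hcon
      have hmem : h₂.getLast hh₂ne ∈ h₂ := List.getLast_mem hh₂ne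
      rw [hcon] at hmem
      exact (List.nodup_cons.1 hh.1).1 hmem
  have hLchain : List.Chain' (fun q q' : V × V => q.2 = q'.1) L := by
    rw [hL, hzip]
    exact chain'_zip_tail (e :: h₂) e
  have hLlast : ∀ (hL' : L ≠ []), (L.getLast hL').2 = e := by
    intro hL'
    have : L.getLast hL' = ((e :: h₂).getLast hcne, e) := by
      rw [List.getLast_congr _ (by simp) hLeq, List.getLast_append_singleton]
    rw [this]
  have hLfst : L.map Prod.fst = e :: h₂ := by
    rw [hL, cpairs]
    exact List.map_fst_zip (le_of_eq (List.length_rotate (e :: h₂) 1).symm)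
  set tour := ((L.map fun q => (path T q.1 q.2).dropLast).flatten) ++ [e] with htour
  have hsteps : steps tour = (L.map fun q => steps (path T q.1 q.2)).flatten :=
    steps_glue T L e hLne hLchain hLlast
  have hadjsteps : ∀ q ∈ steps tour, TreeAdj T q.1 q.2 := by
    intro q hq
    rw [hsteps] at hq
    obtain ⟨l, hl, hql⟩ := List.mem_flatten.1 hq
    obtain ⟨qq, _, rfl⟩ := List.mem_map.1 hl
    exact path_steps_adj T qq.1 qq.2 q hql
  have hcount : ∀ v : V, v ≠ T.root →
      (steps tour).countP
        (fun q => decide ((q.1 = v ∧ q.2 = T.parent v) ∨ (q.1 = T.parent v ∧ q.2 = v))) = 2 := by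
    intro v hv
    rw [hsteps, List.countP_flatten, List.map_map]
    have hmapeq : (L.map ((List.countP
        (fun q => decide ((q.1 = v ∧ q.2 = T.parent v) ∨ (q.1 = T.parent v ∧ q.2 = v))))
          ∘ (fun q => steps (path T q.1 q.2))))
        = L.map fun q => if crossP (fun x => decide (x ∈ T.desc v)) q = true then 1 else 0 := by
      apply List.map_congr_left
      intro q _
      simp only [Function.comp_apply]
      rw [path_count T hv _ (fun qq => by simp) q.1 q.2]
      rfl
    rw [hmapeq, ← countP_eq_sum_map]
    have harc := hconf v
    exact cc_of_arc hh (T.desc v) (mem_desc_self T v) (root_not_mem_desc T hv) harc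
  have htne : tour ≠ [] := by simp [htour]
  have hsteplen : (steps tour).length + 1 = tour.length := by
    rw [steps, List.length_zip, List.length_tail]
    have : tour.length ≠ 0 := fun h0 => htne (List.length_eq_zero_iff.1 h0)
    omega
  refine ⟨tour, ⟨?_, ?_, ?_, ?_⟩, 0, 0, ?_⟩
  · -- length
    have hsum := length_eq_sum_countP (steps tour) (Finset.univ.erase T.root)
      (fun v q => decide ((q.1 = v ∧ q.2 = T.parent v) ∨ (q.1 = T.parent v ∧ q.2 = v)))
      (by
        intro q hq
        obtain ⟨v₀, ⟨hv₀1, hv₀2⟩, huniq⟩ := unique_child T (hadjsteps q hq)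
        exact ⟨v₀, ⟨hv₀1, decide_eq_true hv₀2⟩,
          fun y hy => huniq y ⟨hy.1, of_decide_eq_true hy.2⟩⟩)
    have hsum2 : ∑ v ∈ Finset.univ.erase T.root,
        (steps tour).countP
          (fun q => decide ((q.1 = v ∧ q.2 = T.parent v) ∨ (q.1 = T.parent v ∧ q.2 = v)))
        = 2 * (Fintype.card V - 1) := by
      rw [Finset.sum_congr rfl (fun v hv => hcount v (Finset.mem_erase.1 hv).1)]
      rw [Finset.sum_const, Finset.card_erase_of_mem (Finset.mem_univ _), Finset.card_univ]
      simp [Nat.mul_comm]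
    rw [← hsteplen, hsum, hsum2]
  · -- head? = getLast?
    have hLne0 : L ≠ [] := by
      rw [hL, hzip]
      simp
    obtain ⟨q₀, L₀, hLL⟩ := List.exists_cons_of_ne_nil hLne0
    have hq₀1 : q₀.1 = e := by
      have := hLfst
      rw [hLL] at this
      simpa using congrArg List.head? this
    obtain ⟨s, hs⟩ := piece_cons T q₀.1 q₀.2 (hLne q₀ (by rw [hLL]; simp))
    have hhead : tour.head? = some e := by
      rw [htour, hLL, List.map_cons, List.flatten_cons, hs, hq₀1]
      rfl
    have hlast : tour.getLast? = some e := List.getLast?_concat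
    rw [hhead, hlast]
  · -- chain'
    exact (chain'_iff_steps _ tour).2 hadjsteps
  · -- counts
    exact fun v hv => hcount v hv
  · -- sublist
    rw [List.rotate_zero, List.rotate_zero, htour, List.dropLast_concat]
    calc (e :: h₂ : List V) = L.map Prod.fst := hLfst.symm
      _ <+ _ := ham_sublist_glue T L hLne

end Main
end StmtAux


/-- A Hamiltonian cycle can be obtained by shortcutting some Euler tour of the
doubled tree of `T` if and only if it conforms to `T`. -/
theorem stmt3 {V X : Type} [Fintype V] [DecidableEq V] [MetricSpace X]
    (hn : 3 ≤ Fintype.card V) (f : V → X) (hf : Function.Injective f)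
    (T : ParentTree V) (h : List V) (hh : IsHamCycle h) :
    (∃ t : List V, IsEulerTour T t ∧ IsShortcutting h t) ↔ CycleConforms T h := by
  constructor
  · rintro ⟨t, ht, hs⟩
    exact StmtAux.conforms_of_shortcut T hn hh ht hs
  · intro hconf
    exact StmtAux.exists_tour T hn hh hconf
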